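/- Let b > 1/2, α ∈ (−π, π], and let f be analytic on the open unit disc Δ with f(0) = 0, f'(0) = 1, satisfying |f'(z) + ((1+e^{iα})/2)·z·f''(z) − b| < b for all z ∈ Δ. Then 0 < Re(f'(z)) < 2b for all z ∈ Δ. -/

import Mathlib

open Complex Metric Real Filter Topology

lemma key_avg (b : ℝ) (hb : 0 < b) (γ : ℂ) (hγ : 0 < γ.re) (p : ℂ → ℂ)
    (hp : DifferentiableOn ℂ p (Metric.ball (0:ℂ) 1))
    (hcond : ∀ ζ ∈ Metric.ball (0:ℂ) 1,
      ‖p ζ + γ⁻¹ * ζ * deriv p ζ - (b:ℂ)‖ < b) :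
    ∀ z ∈ Metric.ball (0:ℂ) 1, ‖p z - b‖ < b := by
  have hγ0 : γ ≠ 0 := fun h => by simp [h] at hγ
  set k : ℝ := Complex.normSq γ with hkdef
  have hk0 : 0 < k := Complex.normSq_pos.2 hγ0
  set q : ℂ → ℂ := fun ζ => p ζ + γ⁻¹ * ζ * deriv p ζ with hqdef
  set w : ℂ → ℝ → ℂ := fun z s => z * Complex.exp (-(starRingEnd ℂ) γ * s) with hwdef
  have hw0 : ∀ z : ℂ, w z 0 = z := by intro z; simp [hwdef]
  have hwnorm : ∀ z : ℂ, ∀ s : ℝ, ‖w z s‖ = ‖z‖ * Real.exp (-(γ.re * s)) := by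
    intro z s
    simp [hwdef, map_mul, Complex.norm_exp, Complex.mul_re]
  have hmem : ∀ z ∈ Metric.ball (0:ℂ) 1, ∀ s : ℝ, 0 ≤ s → w z s ∈ Metric.ball (0:ℂ) 1 := by
    intro z hz s hs
    rw [mem_ball_zero_iff] at hz ⊢
    have h1 : Real.exp (-(γ.re * s)) ≤ 1 := Real.exp_le_one_iff.2 (by nlinarith [mul_nonneg hγ.le hs])
    calc ‖w z s‖ = ‖z‖ * Real.exp (-(γ.re * s)) := hwnorm z s
      _ ≤ ‖z‖ * 1 := by
          exact mul_le_mul_of_nonneg_left h1 (norm_nonneg z)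
      _ < 1 := by simpa using hz
  have hdp : DifferentiableOn ℂ (deriv p) (Metric.ball (0:ℂ) 1) :=
    ((hp.analyticOnNhd isOpen_ball).deriv).differentiableOn
  have hq_cont : ContinuousOn q (Metric.ball (0:ℂ) 1) :=
    hp.continuousOn.add ((continuousOn_const.mul continuousOn_id).mul hdp.continuousOn)
  have hwc : ∀ z : ℂ, Continuous (w z) := by
    intro z
    exact continuous_const.mul (Complex.continuous_exp.comp (continuous_const.mul Complex.continuous_ofReal))
  -- derivative of the flow function
  have hexp : ∀ (c : ℂ) (s : ℝ), HasDerivAt (fun t : ℝ => Complex.exp (c * t)) (c * Complex.exp (c * s)) s := by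
    intro c s
    have h1 : HasDerivAt (fun ζ : ℂ => Complex.exp (c * ζ)) (c * Complex.exp (c * s)) (s : ℂ) := by
      simpa [mul_comm] using (((hasDerivAt_id (s:ℂ)).const_mul c).cexp)
    exact h1.comp_ofReal
  have hF : ∀ z ∈ Metric.ball (0:ℂ) 1, ∀ s : ℝ, 0 ≤ s →
      HasDerivAt (fun t : ℝ => Complex.exp (-(k:ℂ) * t) * p (w z t))
        (-(k:ℂ) * Complex.exp (-(k:ℂ) * s) * q (w z s)) s := by
    intro z hz s hs
    have hws := hmem z hz s hs
    have h1 := hexp (-(k:ℂ)) s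
    have h2 : HasDerivAt (w z) (-(starRingEnd ℂ) γ * w z s) s := by
      have := (hexp (-(starRingEnd ℂ) γ) s).const_mul z
      simpa [hwdef, mul_comm, mul_left_comm, mul_assoc] using this
    have h3 : HasDerivAt p (deriv p (w z s)) (w z s) :=
      (hp.differentiableAt (isOpen_ball.mem_nhds hws)).hasDerivAt
    have h4 : HasDerivAt (fun t : ℝ => p (w z t))
        ((-(starRingEnd ℂ) γ * w z s) • deriv p (w z s)) s := by
      have h4' := HasDerivAt.scomp (𝕜 := ℝ) (𝕜' := ℂ) (h := w z) (x := s) h3 h2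
      simpa [Function.comp_def] using h4'
    have h5 := h1.mul h4
    refine h5.congr_deriv (Eq.symm ?_)
    have hkc : (k:ℂ) = γ * (starRingEnd ℂ) γ := (Complex.mul_conj γ).symm
    simp only [hqdef, smul_eq_mul]
    rw [hkc]
    field_simp
    ring
  -- FTC identity
  have hcont_s : ∀ z ∈ Metric.ball (0:ℂ) 1, ∀ T : ℝ, 0 ≤ T →
      ContinuousOn (fun s : ℝ => q (w z s)) (Set.Icc 0 T) := by
    intro z hz T hT
    exact hq_cont.comp (hwc z).continuousOn (fun s hs => hmem z hz s hs.1)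
  have hident : ∀ z ∈ Metric.ball (0:ℂ) 1, ∀ T : ℝ, 0 ≤ T →
      p z - b = Complex.exp (-(k:ℂ) * T) * (p (w z T) - b)
        + ∫ s in (0:ℝ)..T, (k:ℂ) * Complex.exp (-(k:ℂ) * s) * (q (w z s) - b) := by
    intro z hz T hT
    have hkexp : Continuous (fun s : ℝ => (k:ℂ) * Complex.exp (-(k:ℂ) * s)) :=
      continuous_const.mul (Complex.continuous_exp.comp (continuous_const.mul Complex.continuous_ofReal))
    have hint1 : IntervalIntegrable (fun s : ℝ => -(k:ℂ) * Complex.exp (-(k:ℂ) * s) * q (w z s)) MeasureTheory.volume 0 T := by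
      apply ContinuousOn.intervalIntegrable
      rw [Set.uIcc_of_le hT]
      exact ((continuous_const.mul (Complex.continuous_exp.comp
        (continuous_const.mul Complex.continuous_ofReal))).continuousOn).mul (hcont_s z hz T hT)
    have hFTC := intervalIntegral.integral_eq_sub_of_hasDerivAt
      (f := fun t : ℝ => Complex.exp (-(k:ℂ) * t) * p (w z t))
      (fun s hs => hF z hz s (by rw [Set.uIcc_of_le hT] at hs; exact hs.1)) hint1
    have hb_anti : ∀ s : ℝ, HasDerivAt (fun t : ℝ => -Complex.exp (-(k:ℂ) * t) * (b:ℂ))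
        ((k:ℂ) * Complex.exp (-(k:ℂ) * s) * (b:ℂ)) s := by
      intro s
      have h6 := ((hexp (-(k:ℂ)) s).mul_const (b:ℂ)).neg
      have h7 : HasDerivAt (fun t : ℝ => -(Complex.exp (-(k:ℂ) * t) * (b:ℂ)))
          ((k:ℂ) * Complex.exp (-(k:ℂ) * s) * (b:ℂ)) s := by
        refine h6.congr_deriv (Eq.symm ?_); ring
      convert h7 using 2 with t
      ring
    have hintb : IntervalIntegrable (fun s : ℝ => (k:ℂ) * Complex.exp (-(k:ℂ) * s) * (b:ℂ)) MeasureTheory.volume 0 T :=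
      (hkexp.mul continuous_const).intervalIntegrable 0 T
    have hFTCb := intervalIntegral.integral_eq_sub_of_hasDerivAt
      (f := fun t : ℝ => -Complex.exp (-(k:ℂ) * t) * (b:ℂ))
      (fun s _ => hb_anti s) hintb
    have hint1' : IntervalIntegrable (fun s : ℝ => (k:ℂ) * Complex.exp (-(k:ℂ) * s) * q (w z s)) MeasureTheory.volume 0 T := by
      apply ContinuousOn.intervalIntegrable
      rw [Set.uIcc_of_le hT]
      exact (hkexp.continuousOn).mul (hcont_s z hz T hT)
    have hsplit : (∫ s in (0:ℝ)..T, (k:ℂ) * Complex.exp (-(k:ℂ) * s) * (q (w z s) - b))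
        = (∫ s in (0:ℝ)..T, (k:ℂ) * Complex.exp (-(k:ℂ) * s) * q (w z s))
          - ∫ s in (0:ℝ)..T, (k:ℂ) * Complex.exp (-(k:ℂ) * s) * (b:ℂ) := by
      rw [← intervalIntegral.integral_sub hint1' hintb]
      congr 1; ext s; ring
    have hneg : (∫ s in (0:ℝ)..T, -(k:ℂ) * Complex.exp (-(k:ℂ) * s) * q (w z s))
        = -∫ s in (0:ℝ)..T, (k:ℂ) * Complex.exp (-(k:ℂ) * s) * q (w z s) := by
      rw [← intervalIntegral.integral_neg]
      congr 1; ext s; ring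
    rw [hneg] at hFTC
    simp only [Complex.ofReal_zero, mul_zero, Complex.exp_zero, one_mul, neg_mul, neg_zero] at hFTC hFTCb
    rw [hw0 z] at hFTC
    rw [hsplit]
    -- hFTC : -∫ k e q = exp(-kT) * p (w z T) - p z
    -- hFTCb : ∫ k e b = -(exp(-kT)*b) - -(1*b)
    have e1 : (∫ s in (0:ℝ)..T, (k:ℂ) * Complex.exp (-((k:ℂ) * s)) * q (w z s))
        = p z - Complex.exp (-((k:ℂ) * T)) * p (w z T) := by linear_combination -hFTC
    have e2 : (∫ s in (0:ℝ)..T, (k:ℂ) * Complex.exp (-((k:ℂ) * s)) * (b:ℂ))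
        = (b:ℂ) - Complex.exp (-((k:ℂ) * T)) * b := by linear_combination hFTCb
    simp only [neg_mul] at e1 e2 ⊢
    rw [e1, e2]
    ring
  -- the basic bound
  have hbound : ∀ z ∈ Metric.ball (0:ℂ) 1, ∀ T : ℝ, 0 ≤ T → ∀ B : ℝ, 0 ≤ B →
      (∀ s ∈ Set.Icc (0:ℝ) T, ‖q (w z s) - b‖ ≤ B) →
      ‖p z - b‖ ≤ Real.exp (-(k*T)) * ‖p (w z T) - b‖
        + (1 - Real.exp (-(k*T))) * B := by
    intro z hz T hT B hB hqB
    rw [hident z hz T hT]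
    have habs1 : ‖Complex.exp (-(k:ℂ) * T) * (p (w z T) - b)‖
        = Real.exp (-(k*T)) * ‖p (w z T) - b‖ := by
      rw [norm_mul, Complex.norm_exp]
      norm_num
    have hE1 : Real.exp (-(k*T)) ≤ 1 := Real.exp_le_one_iff.2 (by nlinarith)
    have hnorm_int : ‖∫ s in (0:ℝ)..T, (k:ℂ) * Complex.exp (-(k:ℂ) * s) * (q (w z s) - b)‖
        ≤ |∫ s in (0:ℝ)..T, k * Real.exp (-(k*s)) * B| := by
      apply intervalIntegral.norm_integral_le_abs_of_norm_le
      · filter_upwards [MeasureTheory.ae_restrict_mem measurableSet_uIoc] with s hs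
        rw [Set.uIoc_of_le hT] at hs
        have hsIcc : s ∈ Set.Icc (0:ℝ) T := ⟨hs.1.le, hs.2⟩
        have : ‖(k:ℂ) * Complex.exp (-(k:ℂ) * s) * (q (w z s) - b)‖
            = k * Real.exp (-(k*s)) * ‖q (w z s) - b‖ := by
          simp only [norm_mul, map_mul, Complex.norm_exp]
          rw [Complex.norm_real, Real.norm_eq_abs, abs_of_pos hk0]
          norm_num
        rw [this]
        exact mul_le_mul_of_nonneg_left (hqB s hsIcc) (by positivity)
      · apply ContinuousOn.intervalIntegrable
        apply Continuous.continuousOn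
        exact ((continuous_const.mul ((Real.continuous_exp.comp (continuous_const.mul continuous_id).neg))).mul continuous_const)
    have hreal_int : (∫ s in (0:ℝ)..T, k * Real.exp (-(k*s)) * B)
        = (1 - Real.exp (-(k*T))) * B := by
      have hanti : ∀ s : ℝ, HasDerivAt (fun t : ℝ => -Real.exp (-(k*t)) * B)
          (k * Real.exp (-(k*s)) * B) s := by
        intro s
        have h1 : HasDerivAt (fun t : ℝ => Real.exp (-(k*t))) (-k * Real.exp (-(k*s))) s := by
          have := ((hasDerivAt_id s).const_mul (-k)).exp
          simpa [mul_comm, neg_mul] using this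
        have := (h1.neg).mul_const B
        refine this.congr_deriv (Eq.symm ?_)
        ring
      have hint : IntervalIntegrable (fun s : ℝ => k * Real.exp (-(k*s)) * B) MeasureTheory.volume 0 T := by
        apply Continuous.intervalIntegrable
        exact ((continuous_const.mul ((Real.continuous_exp.comp (continuous_const.mul continuous_id).neg))).mul continuous_const)
      have := intervalIntegral.integral_eq_sub_of_hasDerivAt (fun s _ => hanti s) hint
      rw [this]
      simp [mul_comm]
      ring
    calc ‖Complex.exp (-(k:ℂ) * T) * (p (w z T) - b)
          + ∫ s in (0:ℝ)..T, (k:ℂ) * Complex.exp (-(k:ℂ) * s) * (q (w z s) - b)‖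
        ≤ ‖Complex.exp (-(k:ℂ) * T) * (p (w z T) - b)‖
          + ‖∫ s in (0:ℝ)..T, (k:ℂ) * Complex.exp (-(k:ℂ) * s) * (q (w z s) - b)‖ :=
          norm_add_le _ _
      _ ≤ Real.exp (-(k*T)) * ‖p (w z T) - b‖ + (1 - Real.exp (-(k*T))) * B := by
          rw [habs1]
          gcongr
          calc ‖∫ s in (0:ℝ)..T, (k:ℂ) * Complex.exp (-(k:ℂ) * s) * (q (w z s) - b)‖
              ≤ |∫ s in (0:ℝ)..T, k * Real.exp (-(k*s)) * B| := hnorm_int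
            _ = (1 - Real.exp (-(k*T))) * B := by
                rw [hreal_int]
                exact _root_.abs_of_nonneg (mul_nonneg (by linarith) hB)
  -- Step A : nonstrict bound
  have hA : ∀ z ∈ Metric.ball (0:ℂ) 1, ‖p z - b‖ ≤ b := by
    intro z hz
    have hineq : ∀ T : ℝ, 0 ≤ T → ‖p z - b‖
        ≤ Real.exp (-(k*T)) * ‖p (w z T) - b‖ + (1 - Real.exp (-(k*T))) * b := by
      intro T hT
      exact hbound z hz T hT b hb.le (fun s hs => (hcond _ (hmem z hz s hs.1)).le)
    have h0 : Tendsto (fun T : ℝ => Real.exp (-(k*T))) atTop (𝓝 0) := by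
      apply Real.tendsto_exp_atBot.comp
      exact (tendsto_neg_atBot_iff.2 (Tendsto.const_mul_atTop hk0 tendsto_id))
    have hw_tendsto : Tendsto (fun T : ℝ => w z T) atTop (𝓝 0) := by
      rw [tendsto_zero_iff_norm_tendsto_zero]
      have h0' : Tendsto (fun T : ℝ => ‖z‖ * Real.exp (-(γ.re * T))) atTop (𝓝 (‖z‖ * 0)) := by
        apply Tendsto.const_mul
        apply Real.tendsto_exp_atBot.comp
        exact (tendsto_neg_atBot_iff.2 (Tendsto.const_mul_atTop hγ tendsto_id))
      simp only [mul_zero] at h0'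
      convert h0' using 2 with T
      exact hwnorm z T
    have hp0 : ContinuousAt p 0 :=
      (hp.differentiableAt (isOpen_ball.mem_nhds (by simp))).continuousAt
    have h2 : Tendsto (fun T : ℝ => ‖p (w z T) - b‖) atTop
        (𝓝 (‖p 0 - b‖)) := by
      apply (continuous_norm.continuousAt.tendsto).comp
      exact (Tendsto.sub_const ((hp0.tendsto).comp hw_tendsto) _)
    have h3 : Tendsto (fun T : ℝ => Real.exp (-(k*T)) * ‖p (w z T) - b‖
        + (1 - Real.exp (-(k*T))) * b) atTop (𝓝 (0 * ‖p 0 - b‖ + (1 - 0) * b)) :=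
      ((h0.mul h2)).add (((tendsto_const_nhds.sub h0)).mul tendsto_const_nhds)
    simp only [zero_mul, sub_zero, one_mul, zero_add] at h3
    exact ge_of_tendsto h3 (eventually_atTop.2 ⟨0, fun T hT => hineq T hT⟩)
  -- Step B : strict bound
  intro z hz
  set r : ℝ := ‖q z - b‖ with hrdef
  have hr : r < b := hcond z hz
  have hr0 : 0 ≤ r := norm_nonneg _
  set m : ℝ := (r + b) / 2 with hmdef
  have hrm : r < m := by rw [hmdef]; linarith
  have hmb : m < b := by rw [hmdef]; linarith
  have hm0 : 0 ≤ m := by rw [hmdef]; linarith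
  -- continuity in s at 0
  have hG : ContinuousWithinAt (fun s : ℝ => ‖q (w z s) - b‖) (Set.Ici 0) 0 := by
    apply continuous_norm.continuousAt.comp_continuousWithinAt
    apply ContinuousWithinAt.sub _ continuousWithinAt_const
    have hq_at : ContinuousWithinAt q (Metric.ball (0:ℂ) 1) (w z 0) := by
      rw [hw0 z]; exact hq_cont z hz
    exact hq_at.comp ((hwc z).continuousWithinAt) (fun s hs => hmem z hz s hs)
  have hGlt : ∀ᶠ s in nhdsWithin 0 (Set.Ici (0:ℝ)),
      ‖q (w z s) - b‖ < m := by
    have hg0 : ‖q (w z 0) - b‖ < m := by rw [hw0 z]; exact hrm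
    exact Filter.Tendsto.eventually_lt_const hg0 hG
  obtain ⟨ε, hε, hball⟩ := Metric.mem_nhdsWithin_iff.1 hGlt
  set δ : ℝ := ε / 2 with hδdef
  have hδ0 : 0 < δ := by positivity
  have hδB : ∀ s ∈ Set.Icc (0:ℝ) δ, ‖q (w z s) - b‖ ≤ m := by
    intro s hs
    have : s ∈ Metric.ball (0:ℝ) ε ∩ Set.Ici 0 := by
      constructor
      · rw [Metric.mem_ball, Real.dist_eq, sub_zero, _root_.abs_of_nonneg hs.1]
        calc s ≤ δ := hs.2
          _ < ε := by rw [hδdef]; linarith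
      · exact hs.1
    exact (hball this).le
  have hfin := hbound z hz δ hδ0.le m hm0 hδB
  have hwδ : ‖p (w z δ) - b‖ ≤ b := hA _ (hmem z hz δ hδ0.le)
  have hE1 : Real.exp (-(k*δ)) < 1 := Real.exp_lt_one_iff.2 (by nlinarith)
  have hE0 : 0 < Real.exp (-(k*δ)) := Real.exp_pos _
  calc ‖p z - b‖
      ≤ Real.exp (-(k*δ)) * ‖p (w z δ) - b‖ + (1 - Real.exp (-(k*δ))) * m := hfin
    _ < b := by nlinarith

theorem L_alpha_b_deriv_re (b α : ℝ) (hb : 1 / 2 < b) (hα : -π < α ∧ α ≤ π)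
    (f : ℂ → ℂ) (hf : DifferentiableOn ℂ f (Metric.ball (0 : ℂ) 1))
    (hf0 : f 0 = 0) (hf1 : deriv f 0 = 1)
    (hcond : ∀ z ∈ Metric.ball (0 : ℂ) 1,
      ‖deriv f z + ((1 + Complex.exp (α * Complex.I)) / 2) * z * deriv (deriv f) z
        - (b : ℂ)‖ < b) :
    ∀ z ∈ Metric.ball (0 : ℂ) 1, 0 < (deriv f z).re ∧ (deriv f z).re < 2 * b := by
  have hb0 : 0 < b := by linarith
  have hkey : ∀ z ∈ Metric.ball (0:ℂ) 1, ‖deriv f z - b‖ < b := by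
    by_cases hπ : α = π
    · intro z hz
      have hc : ((1 : ℂ) + Complex.exp (α * Complex.I)) / 2 = 0 := by
        rw [hπ]
        rw [show ((π:ℝ) : ℂ) * Complex.I = (π : ℂ) * Complex.I by norm_num]
        rw [Complex.exp_pi_mul_I]
        ring
      have := hcond z hz
      rw [hc] at this
      simpa using this
    · set c : ℂ := ((1 : ℂ) + Complex.exp (α * Complex.I)) / 2 with hcdef
      have hαlt : α < π := lt_of_le_of_ne hα.2 hπ
      have hcre : c.re = (1 + Real.cos α) / 2 := by
        rw [hcdef]
        simp [Complex.div_re, Complex.add_re, Complex.add_im, Complex.exp_ofReal_mul_I_re,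
          Complex.normSq]
      have hcos : 0 < (1 + Real.cos α) / 2 := by
        have h2 : Real.cos (α/2) ^ 2 = (1 + Real.cos α)/2 := by
          rw [Real.cos_sq]
          rw [mul_div_cancel₀ α (two_ne_zero)]
          ring
        have hcpos : 0 < Real.cos (α/2) :=
          Real.cos_pos_of_mem_Ioo ⟨by linarith [hα.1], by linarith⟩
        nlinarith
      have hcre0 : 0 < c.re := by rw [hcre]; exact hcos
      have hc0 : c ≠ 0 := fun h => by rw [h] at hcre0; simp at hcre0
      have hγ : 0 < (c⁻¹).re := by
        rw [Complex.inv_re]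
        exact div_pos hcre0 (Complex.normSq_pos.2 hc0)
      have hp : DifferentiableOn ℂ (deriv f) (Metric.ball (0:ℂ) 1) :=
        ((hf.analyticOnNhd isOpen_ball).deriv).differentiableOn
      have := key_avg b hb0 c⁻¹ hγ (deriv f) hp ?_
      · exact this
      · intro ζ hζ
        rw [inv_inv]
        exact hcond ζ hζ
  intro z hz
  have h := hkey z hz
  have hre := Complex.abs_re_le_norm (deriv f z - b)
  rw [Complex.sub_re, Complex.ofReal_re] at hre
  have : |(deriv f z).re - b| < b := lt_of_le_of_lt hre h
  rw [abs_lt] at this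
  constructor <;> linarith [this.1, this.2]
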